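/- Scenario C: For a demand sequence with σ²_total > 0, the batched-order variance strictly exceeds the total demand variance, σ²_agg > σ²_total, if and only if σ²_within / σ²_total < (R² − 1)/R²; i.e., order batching amplifies demand variance (the bullwhip effect occurs) exactly when the within-cycle variance fraction is below (R² − 1)/R². -/

import Mathlib

/-- Scenario C (bullwhip effect): batching amplifies variance iff the within-cycle variance fraction is below `(R² − 1)/R²`. -/
theorem batching_amplifies_iff
    (M R : ℕ) (hM : 0 < M) (hR : 0 < R)
    (x : Fin M → Fin R → ℝ)
    (μ : ℝ) (hμ : μ = (∑ i, ∑ t, x i t) / (M * R))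
    (σ2total : ℝ) (hσ2total : σ2total = (∑ i, ∑ t, (x i t - μ) ^ 2) / (M * R))
    (hpos : 0 < σ2total)
    (m : Fin M → ℝ) (hm : ∀ i, m i = (∑ t, x i t) / R)
    (σ2within : ℝ)
    (hσ2within : σ2within = (∑ i, (∑ t, (x i t - m i) ^ 2) / R) / M)
    (S : Fin M → ℝ) (hS : ∀ i, S i = ∑ t, x i t)
    (Sbar : ℝ) (hSbar : Sbar = (∑ i, S i) / M)
    (σ2agg : ℝ) (hσ2agg : σ2agg = (∑ i, (S i - Sbar) ^ 2) / M) :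
    σ2agg > σ2total ↔ σ2within / σ2total < ((R : ℝ) ^ 2 - 1) / (R : ℝ) ^ 2 := by
  have hMR : (0:ℝ) < (M:ℝ) := by exact_mod_cast hM
  have hRR : (0:ℝ) < (R:ℝ) := by exact_mod_cast hR
  set B : ℝ := (∑ i, (m i - μ) ^ 2) / M with hB
  -- each cycle's deviations from its mean sum to zero
  have hzero : ∀ i, (∑ t, (x i t - m i)) = 0 := by
    intro i
    have h := hm i
    rw [Finset.sum_sub_distrib, Finset.sum_const, Finset.card_univ, Fintype.card_fin]
    rw [h]
    rw [nsmul_eq_mul]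
    field_simp
    ring
  -- per-cycle decomposition
  have hdecomp : ∀ i, (∑ t, (x i t - μ) ^ 2)
      = (∑ t, (x i t - m i) ^ 2) + (R:ℝ) * (m i - μ) ^ 2 := by
    intro i
    have key : ∀ t : Fin R, (x i t - μ) ^ 2
        = (x i t - m i) ^ 2 + 2 * (m i - μ) * (x i t - m i) + (m i - μ) ^ 2 := by
      intro t; ring
    calc (∑ t, (x i t - μ) ^ 2)
        = ∑ t, ((x i t - m i) ^ 2 + 2 * (m i - μ) * (x i t - m i) + (m i - μ) ^ 2) := by
          exact Finset.sum_congr rfl (fun t _ => key t)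
      _ = (∑ t, (x i t - m i) ^ 2) + 2 * (m i - μ) * (∑ t, (x i t - m i))
            + (R:ℝ) * (m i - μ) ^ 2 := by
          rw [Finset.sum_add_distrib, Finset.sum_add_distrib, ← Finset.mul_sum,
            Finset.sum_const, Finset.card_univ, Fintype.card_fin, nsmul_eq_mul]
      _ = (∑ t, (x i t - m i) ^ 2) + (R:ℝ) * (m i - μ) ^ 2 := by
          rw [hzero i]; ring
  -- σ2total = σ2within + B
  have htot : σ2total = σ2within + B := by
    have hsum : (∑ i, ∑ t, (x i t - μ) ^ 2)
        = (∑ i, ∑ t, (x i t - m i) ^ 2) + (R:ℝ) * (∑ i, (m i - μ) ^ 2) := by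
      rw [Finset.mul_sum, ← Finset.sum_add_distrib]
      exact Finset.sum_congr rfl (fun i _ => hdecomp i)
    have hw : σ2within = (∑ i, ∑ t, (x i t - m i) ^ 2) / ((M:ℝ) * R) := by
      rw [hσ2within, ← Finset.sum_div, div_div, mul_comm]
    rw [hσ2total, hsum, hw, hB]
    field_simp
  -- σ2agg = R^2 * B
  have hagg : σ2agg = (R:ℝ) ^ 2 * B := by
    have hSi : ∀ i, S i = (R:ℝ) * m i := by
      intro i; rw [hS i, hm i]; field_simp
    have hSb : Sbar = (R:ℝ) * μ := by
      have hsS : (∑ i, S i) = ∑ i, ∑ t, x i t :=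
        Finset.sum_congr rfl (fun i _ => hS i)
      rw [hSbar, hμ, hsS]
      field_simp
    have hsum2 : (∑ i, (S i - Sbar) ^ 2) = (R:ℝ) ^ 2 * ∑ i, (m i - μ) ^ 2 := by
      rw [Finset.mul_sum]
      refine Finset.sum_congr rfl (fun i _ => ?_)
      rw [hSi i, hSb]; ring
    rw [hσ2agg, hsum2, hB, mul_div_assoc]
  -- final algebra
  have hR2 : (0:ℝ) < (R:ℝ) ^ 2 := by positivity
  have hpos' : 0 < σ2within + B := htot ▸ hpos
  rw [hagg, htot, div_lt_div_iff₀ hpos' hR2]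
  constructor
  · intro h; nlinarith
  · intro h; nlinarith
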